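/- For the Kontsevich bracket {a,b}_K = μ(⟨⟨a,b⟩⟩_K) on A = ℂ⟨u^{±1},v^{±1}⟩, the Casimir c = uvu⁻¹v⁻¹ does NOT generate a trivial flow: {c, u}_K = uvu⁻¹v⁻¹u - u²vu⁻¹v⁻¹ ≠ 0 in A. -/

import Mathlib

open scoped TensorProduct

noncomputable section

abbrev A : Type := MonoidAlgebra ℂ (FreeGroup Bool)

def u : A := MonoidAlgebra.of ℂ (FreeGroup Bool) (FreeGroup.of false)
def v : A := MonoidAlgebra.of ℂ (FreeGroup Bool) (FreeGroup.of true)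
def ui : A := MonoidAlgebra.of ℂ (FreeGroup Bool) (FreeGroup.of false)⁻¹
def vi : A := MonoidAlgebra.of ℂ (FreeGroup Bool) (FreeGroup.of true)⁻¹

/-- The structure of a Kontsevich double bracket on A: a bilinear map
A × A → A ⊗ A satisfying both Leibniz rules and the prescribed values on the
generators u, v. -/
structure KontsevichBracket (db : A →ₗ[ℂ] A →ₗ[ℂ] A ⊗[ℂ] A) : Prop where
  outer : ∀ a b c : A,
    db a (b * c) = db a b * ((1 : A) ⊗ₜ[ℂ] c) + (b ⊗ₜ[ℂ] (1 : A)) * db a c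
  inner : ∀ a b c : A,
    db (a * b) c = db a c * (b ⊗ₜ[ℂ] (1 : A)) + ((1 : A) ⊗ₜ[ℂ] a) * db b c
  huv : db u v = -((v * u) ⊗ₜ[ℂ] (1 : A))
  hvu : db v u = (u * v) ⊗ₜ[ℂ] (1 : A)
  huu : db u u = 0
  hvv : db v v = 0

/- STATEMENT 14: For the Kontsevich bracket {a,b}_K = μ(⟨⟨a,b⟩⟩_K) and the
Casimir c = uvu⁻¹v⁻¹, the flow generated by c is nontrivial:
{c,u}_K = uvu⁻¹v⁻¹u - u²vu⁻¹v⁻¹ ≠ 0. -/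

def c : A := u * v * ui * vi

lemma u_ui : u * ui = 1 := by
  rw [u, ui, ← map_mul, mul_inv_cancel, map_one]

lemma ui_u : ui * u = 1 := by
  rw [u, ui, ← map_mul, inv_mul_cancel, map_one]

lemma v_vi : v * vi = 1 := by
  rw [v, vi, ← map_mul, mul_inv_cancel, map_one]

lemma vi_v : vi * v = 1 := by
  rw [v, vi, ← map_mul, inv_mul_cancel, map_one]

lemma tm (a b c d : A) :
    (a ⊗ₜ[ℂ] b) * (c ⊗ₜ[ℂ] d) = (a * c) ⊗ₜ[ℂ] (b * d) :=
  Algebra.TensorProduct.tmul_mul_tmul (R := ℂ) a c b d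

lemma db_one (db : A →ₗ[ℂ] A →ₗ[ℂ] A ⊗[ℂ] A) (hK : KontsevichBracket db)
    (b : A) : db 1 b = 0 := by
  have h := hK.inner 1 1 b
  rw [one_mul, ← Algebra.TensorProduct.one_def, mul_one, one_mul] at h
  exact (left_eq_add.mp h)

lemma db_ui_u (db : A →ₗ[ℂ] A →ₗ[ℂ] A ⊗[ℂ] A) (hK : KontsevichBracket db) :
    db ui u = 0 := by
  have h := hK.inner u ui u
  rw [u_ui, hK.huu, zero_mul, zero_add, db_one db hK] at h
  have h2 : ((1 : A) ⊗ₜ[ℂ] ui) * (((1 : A) ⊗ₜ[ℂ] u) * db ui u)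
      = ((1 : A) ⊗ₜ[ℂ] ui) * 0 := by rw [← h]
  rwa [← mul_assoc, tm, one_mul, ui_u,
    ← Algebra.TensorProduct.one_def, one_mul, mul_zero] at h2

lemma db_vi_u (db : A →ₗ[ℂ] A →ₗ[ℂ] A ⊗[ℂ] A) (hK : KontsevichBracket db) :
    u ⊗ₜ[ℂ] vi + db vi u = 0 := by
  have h := hK.inner v vi u
  rw [v_vi, hK.hvu, db_one db hK] at h
  have t1 : (u * v) ⊗ₜ[ℂ] (1 : A) * (vi ⊗ₜ[ℂ] (1 : A)) = u ⊗ₜ[ℂ] (1 : A) := by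
    rw [tm, mul_assoc, v_vi, mul_one, mul_one]
  have t2 : ((1 : A) ⊗ₜ[ℂ] vi) * (u ⊗ₜ[ℂ] (1 : A)) = u ⊗ₜ[ℂ] vi := by
    rw [tm, one_mul, mul_one]
  have t3 : ∀ X : A ⊗[ℂ] A,
      ((1 : A) ⊗ₜ[ℂ] vi) * (((1 : A) ⊗ₜ[ℂ] v) * X) = X := by
    intro X
    rw [← mul_assoc, tm, one_mul, vi_v, ← Algebra.TensorProduct.one_def, one_mul]
  have h2 : ((1 : A) ⊗ₜ[ℂ] vi) *
      ((u * v) ⊗ₜ[ℂ] (1 : A) * (vi ⊗ₜ[ℂ] (1 : A)) + ((1 : A) ⊗ₜ[ℂ] v) * db vi u)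
      = 0 := by rw [← h, mul_zero]
  rwa [mul_add, t1, t2, t3] at h2

theorem casimir_flow_nontrivial
    (db : A →ₗ[ℂ] A →ₗ[ℂ] A ⊗[ℂ] A) (hK : KontsevichBracket db) :
    LinearMap.mul' ℂ A (db c u) = u * v * ui * vi * u - u * u * v * ui * vi ∧
    LinearMap.mul' ℂ A (db c u) ≠ 0 := by
  have huvu : db (u * v) u = (u * v) ⊗ₜ[ℂ] u := by
    rw [hK.inner u v u, hK.huu, hK.hvu, zero_mul, zero_add,
      tm, one_mul, mul_one]
  have hA1 : db (u * v * ui) u = (u * v * ui) ⊗ₜ[ℂ] u := by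
    rw [hK.inner (u * v) ui u, huvu, db_ui_u db hK, mul_zero, add_zero,
      tm, mul_one]
  have hc : db c u = (u * v * ui * vi) ⊗ₜ[ℂ] u - u ⊗ₜ[ℂ] (u * v * ui * vi) := by
    have h := hK.inner (u * v * ui) vi u
    rw [hA1, tm, mul_one] at h
    have key : ((1 : A) ⊗ₜ[ℂ] (u * v * ui)) * (u ⊗ₜ[ℂ] vi + db vi u) = 0 := by
      rw [db_vi_u db hK, mul_zero]
    rw [mul_add, tm, one_mul] at key
    have h2 : db (u * v * ui * vi) u + u ⊗ₜ[ℂ] (u * v * ui * vi)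
        = (u * v * ui * vi) ⊗ₜ[ℂ] u := by
      rw [h, add_assoc, add_comm (((1:A) ⊗ₜ[ℂ] (u*v*ui)) * db vi u), ← add_assoc,
        add_assoc, key, add_zero]
    rw [c]
    exact eq_sub_of_add_eq h2
  have hmul : LinearMap.mul' ℂ A (db c u)
      = u * v * ui * vi * u - u * u * v * ui * vi := by
    rw [hc, map_sub, LinearMap.mul'_apply, LinearMap.mul'_apply]
    simp [mul_assoc]
  refine ⟨hmul, ?_⟩
  rw [hmul]
  intro h0
  -- reduce to group elements
  set g1 : FreeGroup Bool := FreeGroup.of false * FreeGroup.of true *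
    (FreeGroup.of false)⁻¹ * (FreeGroup.of true)⁻¹ * FreeGroup.of false with hg1
  set g2 : FreeGroup Bool := FreeGroup.of false * FreeGroup.of false *
    FreeGroup.of true * (FreeGroup.of false)⁻¹ * (FreeGroup.of true)⁻¹ with hg2
  have e1 : u * v * ui * vi * u = MonoidAlgebra.of ℂ (FreeGroup Bool) g1 := by
    simp [u, v, ui, vi, hg1, map_mul]
  have e2 : u * u * v * ui * vi = MonoidAlgebra.of ℂ (FreeGroup Bool) g2 := by
    simp [u, v, ui, vi, hg2, map_mul]
  rw [e1, e2, sub_eq_zero] at h0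
  have hne : g1 ≠ g2 := by decide
  have : (MonoidAlgebra.of ℂ (FreeGroup Bool) g1).coeff g1
      = (MonoidAlgebra.of ℂ (FreeGroup Bool) g2).coeff g1 := by rw [h0]
  simp only [MonoidAlgebra.of_apply, MonoidAlgebra.coeff_single, Finsupp.single_apply, if_pos rfl,
    if_neg (Ne.symm hne)] at this
  exact one_ne_zero this
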